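/- arXiv:2506.13531 — 4 statements merged into one kernel-verified Lean document; each statement's English description precedes it below -/
import Mathlib

section
/- Let Q : ℝ → Matrix(n,n,ℝ) be a continuous function such that for every r ∈ ℝ the matrix Q(r) is orthogonal (Q(r)Q(r)ᵀ = Id) with det Q(r) = 1. Then the map T : ℝⁿ → ℝⁿ defined by T(x) = Q(‖x‖²)·x preserves the standard Gaussian measure on ℝⁿ, i.e., the pushforward of the standard Gaussian measure under T equals the standard Gaussian measure. -/
open MeasureTheory ProbabilityTheory Matrix Filter Topology
open scoped ENNReal NNReal

variable {n : ℕ}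

lemma continuous_mulVec_pair (n : ℕ) :
    Continuous (fun p : Matrix (Fin n) (Fin n) ℝ × (Fin n → ℝ) => p.1.mulVec p.2) := by
  refine continuous_pi fun j => ?_
  simp only [Matrix.mulVec, dotProduct]
  exact continuous_finset_sum _ fun i _ =>
    (((continuous_apply i).comp ((continuous_apply j).comp continuous_fst)).mul
      ((continuous_apply i).comp continuous_snd))

lemma sumsq_mulVec {R : Matrix (Fin n) (Fin n) ℝ} (hR : R * Rᵀ = 1) (x : Fin n → ℝ) :
    ∑ i, (R.mulVec x i)^2 = ∑ i, x i ^2 := by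
  have h1 : Rᵀ * R = 1 := mul_eq_one_comm.mp hR
  have h2 : R.mulVec x ⬝ᵥ R.mulVec x = x ⬝ᵥ x := by
    rw [Matrix.dotProduct_mulVec, Matrix.vecMul_mulVec, h1, Matrix.vecMul_one]
  simpa [dotProduct, sq] using h2

lemma lintegral_pi_prod : ∀ (n : ℕ) (f : Fin n → ℝ → ℝ≥0∞), (∀ i, Measurable (f i)) →
    ∫⁻ x : Fin n → ℝ, ∏ i, f i (x i) ∂(Measure.pi fun _ => (volume : Measure ℝ))
      = ∏ i, ∫⁻ y, f i y := by
  intro n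
  induction n with
  | zero => intro f hf; simp
  | succ n ih =>
    intro f hf
    have hmp := (measurePreserving_piFinSuccAbove (fun _ : Fin (n+1) => (volume : Measure ℝ)) 0).symm
    have hmeas : Measurable fun x : Fin (n+1) → ℝ => ∏ i, f i (x i) :=
      Finset.measurable_prod _ fun i _ => (hf i).comp (measurable_pi_apply i)
    rw [← hmp.lintegral_comp hmeas]
    have : ∀ p : ℝ × (Fin n → ℝ),
        (∏ i, f i ((MeasurableEquiv.piFinSuccAbove (fun _ => ℝ) 0).symm p i))
          = f 0 p.1 * ∏ j : Fin n, f (Fin.succ j) (p.2 j) := by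
      intro p
      rw [Fin.prod_univ_succ]
      simp [MeasurableEquiv.piFinSuccAbove_symm_apply, Fin.insertNthEquiv, Fin.insertNth_zero,
        Fin.zero_succAbove, Fin.cons_succ]
    calc ∫⁻ p : ℝ × (Fin n → ℝ), (∏ i, f i ((MeasurableEquiv.piFinSuccAbove (fun _ => ℝ) 0).symm p i))
          ∂((volume : Measure ℝ).prod (Measure.pi fun _ => (volume : Measure ℝ)))
        = ∫⁻ p : ℝ × (Fin n → ℝ), f 0 p.1 * ∏ j : Fin n, f (Fin.succ j) (p.2 j)
          ∂((volume : Measure ℝ).prod (Measure.pi fun _ => (volume : Measure ℝ))) := by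
          exact lintegral_congr this
      _ = (∫⁻ y, f 0 y) * ∫⁻ x : Fin n → ℝ, ∏ j : Fin n, f (Fin.succ j) (x j)
            ∂(Measure.pi fun _ => (volume : Measure ℝ)) := by
          exact lintegral_prod_mul ((hf 0).aemeasurable)
            ((Finset.measurable_prod _ fun j _ => (hf (Fin.succ j)).comp (measurable_pi_apply j)).aemeasurable)
      _ = ∏ i, ∫⁻ y, f i y := by
          rw [ih _ fun j => hf (Fin.succ j), Fin.prod_univ_succ]

lemma prod_gaussianPDF (n : ℕ) (x : Fin n → ℝ) :
    ∏ i, gaussianPDF 0 1 (x i)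
      = ENNReal.ofReal ((Real.sqrt (2 * Real.pi))⁻¹ ^ n * Real.exp (-(∑ i, x i ^ 2) / 2)) := by
  simp only [gaussianPDF]
  rw [← ENNReal.ofReal_prod_of_nonneg]
  · congr 1
    simp only [gaussianPDFReal, NNReal.coe_one, mul_one, sub_zero, one_div]
    rw [Finset.prod_mul_distrib, Finset.prod_const, ← Real.exp_sum]
    congr 1
    · simp [Finset.card_univ]
    · rw [← Finset.sum_div, ← Finset.sum_neg_distrib]
  · exact fun i _ => gaussianPDFReal_nonneg 0 1 (x i)
lemma gauss_pi_eq (n : ℕ) :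
    Measure.pi (fun _ : Fin n => gaussianReal 0 1)
      = (Measure.pi fun _ : Fin n => (volume : Measure ℝ)).withDensity
          (fun x => ∏ i, gaussianPDF 0 1 (x i)) := by
  refine Measure.pi_eq fun s hs => ?_
  rw [withDensity_apply _ (MeasurableSet.univ_pi hs),
    ← lintegral_indicator (MeasurableSet.univ_pi hs)]
  have heq : ∀ x : Fin n → ℝ,
      (Set.pi Set.univ s).indicator (fun x => ∏ i, gaussianPDF 0 1 (x i)) x
        = ∏ i, (s i).indicator (gaussianPDF 0 1) (x i) := by
    intro x
    by_cases hx : x ∈ Set.pi Set.univ s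
    · rw [Set.indicator_of_mem hx]
      exact Finset.prod_congr rfl fun i _ => (Set.indicator_of_mem (hx i trivial) _).symm
    · rw [Set.indicator_of_notMem hx]
      rw [Set.mem_univ_pi] at hx
      push_neg at hx
      obtain ⟨i, hi⟩ := hx
      exact (Finset.prod_eq_zero (Finset.mem_univ i) (Set.indicator_of_notMem hi _)).symm
  rw [lintegral_congr heq,
    lintegral_pi_prod n _ (fun i => (measurable_gaussianPDF 0 1).indicator (hs i))]
  refine Finset.prod_congr rfl fun i _ => ?_
  rw [lintegral_indicator (hs i), ← gaussianReal_apply 0 one_ne_zero]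
lemma continuous_mulVec_left {n : ℕ} (R : Matrix (Fin n) (Fin n) ℝ) :
    Continuous R.mulVec :=
  (continuous_mulVec_pair n).comp (continuous_const.prodMk continuous_id)

lemma rot_pres (n : ℕ) {R : Matrix (Fin n) (Fin n) ℝ} (hR : R * Rᵀ = 1) (hdet : R.det = 1) :
    (Measure.pi fun _ : Fin n => gaussianReal 0 1).map R.mulVec
      = Measure.pi fun _ : Fin n => gaussianReal 0 1 := by
  have hRm : Measurable R.mulVec := (continuous_mulVec_left R).measurable
  have hvol : MeasurePreserving R.mulVec (Measure.pi fun _ : Fin n => (volume : Measure ℝ))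
      (Measure.pi fun _ : Fin n => (volume : Measure ℝ)) := by
    refine ⟨hRm, ?_⟩
    have h := Real.map_matrix_volume_pi_eq_smul_volume_pi (M := R)
      (by rw [hdet]; exact one_ne_zero)
    rw [hdet] at h
    simp only [inv_one, abs_one, ENNReal.ofReal_one, one_smul] at h
    have hco : ⇑(Matrix.toLin' R) = R.mulVec := by funext v; exact Matrix.toLin'_apply R v
    rw [hco] at h
    rwa [volume_pi] at h
  refine Measure.ext fun A hA => ?_
  rw [Measure.map_apply hRm hA, gauss_pi_eq, withDensity_apply _ (hRm hA),
    withDensity_apply _ hA, ← lintegral_indicator (hRm hA), ← lintegral_indicator hA]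
  have key : ∀ x, (R.mulVec ⁻¹' A).indicator (fun x => ∏ i, gaussianPDF 0 1 (x i)) x
      = (A.indicator (fun x => ∏ i, gaussianPDF 0 1 (x i))) (R.mulVec x) := by
    intro x
    have hD : ∏ i, gaussianPDF 0 1 (R.mulVec x i) = ∏ i, gaussianPDF 0 1 (x i) := by
      rw [prod_gaussianPDF, prod_gaussianPDF, sumsq_mulVec hR]
    by_cases hx : R.mulVec x ∈ A
    · rw [Set.indicator_of_mem hx, Set.indicator_of_mem (Set.mem_preimage.mpr hx), hD]
    · rw [Set.indicator_of_notMem hx]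
      exact Set.indicator_of_notMem (s := R.mulVec ⁻¹' A) (fun h => hx h)
        (fun x => ∏ i, gaussianPDF 0 1 (x i))
  rw [lintegral_congr key]
  exact hvol.lintegral_comp ((Finset.measurable_prod _ fun i _ =>
    (measurable_gaussianPDF 0 1).comp (measurable_pi_apply i)).indicator hA)
lemma step_pres (n : ℕ) (k : ℕ) (Q : ℝ → Matrix (Fin n) (Fin n) ℝ)
    (hQcont : Continuous Q) (hQorth : ∀ r, Q r * (Q r)ᵀ = 1) (hQdet : ∀ r, (Q r).det = 1) :
    (Measure.pi fun _ : Fin n => gaussianReal 0 1).map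
        (fun x : Fin n → ℝ => (Q ((⌊(∑ i, x i ^ 2) * 2 ^ k⌋ : ℝ) / 2 ^ k)).mulVec x)
      = Measure.pi fun _ : Fin n => gaussianReal 0 1 := by
  set μ := Measure.pi fun _ : Fin n => gaussianReal 0 1 with hμ
  have hsq : Measurable fun x : Fin n → ℝ => ∑ i, x i ^ 2 :=
    (Finset.measurable_sum _ fun i _ => (measurable_pi_apply i).pow_const 2)
  have hflr : Measurable fun x : Fin n → ℝ => (⌊(∑ i, x i ^ 2) * 2 ^ k⌋ : ℝ) / 2 ^ k :=
    (measurable_of_countable fun z : ℤ => ((z : ℝ) / 2 ^ k)).comp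
      (Measurable.floor (hsq.mul_const _))
  have hTk : Measurable fun x : Fin n → ℝ =>
      (Q ((⌊(∑ i, x i ^ 2) * 2 ^ k⌋ : ℝ) / 2 ^ k)).mulVec x := by
    refine measurable_pi_lambda _ fun j => ?_
    simp only [Matrix.mulVec, dotProduct]
    refine Finset.measurable_sum _ fun i _ => Measurable.mul ?_ (measurable_pi_apply i)
    exact (((continuous_apply i).comp ((continuous_apply j).comp hQcont)).measurable).comp hflr
  -- partition
  set S : ℤ → Set (Fin n → ℝ) := fun j => {x | ⌊(∑ i, x i ^ 2) * 2 ^ k⌋ = j} with hS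
  have hSmeas : ∀ j, MeasurableSet (S j) :=
    fun j => (Measurable.floor (hsq.mul_const _)) (measurableSet_singleton j)
  have hpart : ∀ B : Set (Fin n → ℝ), MeasurableSet B → μ B = ∑' j : ℤ, μ (B ∩ S j) := by
    intro B hB
    have hcov : B = ⋃ j : ℤ, B ∩ S j := by
      ext x
      simp only [Set.mem_iUnion, Set.mem_inter_iff, hS, Set.mem_setOf_eq]
      exact ⟨fun h => ⟨_, h, rfl⟩, fun ⟨j, h, _⟩ => h⟩
    have hdisj : Pairwise (Function.onFun Disjoint fun j => B ∩ S j) := by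
      intro i j hij
      simp only [Function.onFun]
      refine Set.disjoint_left.mpr fun x hx hx' => hij ?_
      rw [← hx.2, ← hx'.2]
    have h2 := measure_iUnion (μ := μ) hdisj fun j => hB.inter (hSmeas j)
    rw [← hcov] at h2
    exact h2
  refine Measure.ext fun A hA => ?_
  rw [Measure.map_apply hTk hA, hpart _ (hTk hA), hpart _ hA]
  refine tsum_congr fun j => ?_
  have hset : (fun x : Fin n → ℝ =>
        (Q ((⌊(∑ i, x i ^ 2) * 2 ^ k⌋ : ℝ) / 2 ^ k)).mulVec x) ⁻¹' A ∩ S j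
      = (Q ((j : ℝ) / 2 ^ k)).mulVec ⁻¹' (A ∩ S j) := by
    ext x
    simp only [Set.mem_inter_iff, Set.mem_preimage, hS, Set.mem_setOf_eq]
    constructor
    · rintro ⟨hxA, hxj⟩
      rw [hxj] at hxA
      exact ⟨hxA, by rw [sumsq_mulVec (hQorth _)]; exact hxj⟩
    · rintro ⟨hxA, hxj⟩
      rw [sumsq_mulVec (hQorth _)] at hxj
      refine ⟨?_, hxj⟩
      rw [hxj]
      exact hxA
  rw [hset, ← Measure.map_apply (continuous_mulVec_left _).measurable (hA.inter (hSmeas j)),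
    rot_pres n (hQorth _) (hQdet _)]
lemma meas_Tk (n : ℕ) (k : ℕ) (Q : ℝ → Matrix (Fin n) (Fin n) ℝ) (hQcont : Continuous Q) :
    Measurable fun x : Fin n → ℝ =>
      (Q ((⌊(∑ i, x i ^ 2) * 2 ^ k⌋ : ℝ) / 2 ^ k)).mulVec x := by
  have hsq : Measurable fun x : Fin n → ℝ => ∑ i, x i ^ 2 :=
    (Finset.measurable_sum _ fun i _ => (measurable_pi_apply i).pow_const 2)
  have hflr : Measurable fun x : Fin n → ℝ => (⌊(∑ i, x i ^ 2) * 2 ^ k⌋ : ℝ) / 2 ^ k :=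
    (measurable_of_countable fun z : ℤ => ((z : ℝ) / 2 ^ k)).comp
      (Measurable.floor (hsq.mul_const _))
  refine measurable_pi_lambda _ fun j => ?_
  simp only [Matrix.mulVec, dotProduct]
  refine Finset.measurable_sum _ fun i _ => Measurable.mul ?_ (measurable_pi_apply i)
  exact (((continuous_apply i).comp ((continuous_apply j).comp hQcont)).measurable).comp hflr

lemma tendsto_dyadic (r : ℝ) :
    Tendsto (fun k : ℕ => (⌊r * 2 ^ k⌋ : ℝ) / 2 ^ k) atTop (nhds r) := by
  have hk : ∀ k : ℕ, (0:ℝ) < 2 ^ k := fun k => by positivity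
  have h1 : ∀ k : ℕ, r - (2:ℝ)⁻¹ ^ k ≤ (⌊r * 2 ^ k⌋ : ℝ) / 2 ^ k := by
    intro k
    have he : r - (2:ℝ)⁻¹ ^ k = (r * 2 ^ k - 1) / 2 ^ k := by
      rw [eq_div_iff (hk k).ne', sub_mul, ← mul_pow, inv_mul_cancel₀ two_ne_zero, one_pow]
    rw [he, div_le_div_iff₀ (hk k) (hk k)]
    have := Int.sub_one_lt_floor (r * 2 ^ k)
    nlinarith [this, hk k]
  have h2 : ∀ k : ℕ, (⌊r * 2 ^ k⌋ : ℝ) / 2 ^ k ≤ r := by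
    intro k
    rw [div_le_iff₀ (hk k)]
    exact Int.floor_le _
  have h3 : Tendsto (fun k : ℕ => r - (2:ℝ)⁻¹ ^ k) atTop (nhds r) := by
    have h4 : Tendsto (fun k : ℕ => ((2:ℝ)⁻¹) ^ k) atTop (nhds 0) :=
      tendsto_pow_atTop_nhds_zero_of_lt_one (by norm_num) (by norm_num)
    simpa using tendsto_const_nhds.sub h4
  exact tendsto_of_tendsto_of_tendsto_of_le_of_le h3 tendsto_const_nhds h1 h2

/-- Norm-dependent rotations preserve the standard Gaussian measure: if
`Q : ℝ → Matrix (Fin n) (Fin n) ℝ` is continuous with `Q r` special orthogonal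
for every `r`, then `T x = Q (‖x‖²) x` (with `‖x‖²` the squared Euclidean norm
`∑ i, x i ^ 2`) pushes the standard Gaussian measure on `ℝⁿ` (the `n`-fold
product of `N(0,1)`) forward to itself. -/
theorem stmt_7 (n : ℕ) (Q : ℝ → Matrix (Fin n) (Fin n) ℝ)
    (hQcont : Continuous Q)
    (hQorth : ∀ r, Q r * (Q r)ᵀ = 1) (hQdet : ∀ r, (Q r).det = 1) :
    (Measure.pi (fun _ : Fin n => gaussianReal 0 1)).map
        (fun x : Fin n → ℝ => (Q (∑ i, x i ^ 2)).mulVec x)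
      = Measure.pi (fun _ : Fin n => gaussianReal 0 1) := by
  set μ := Measure.pi (fun _ : Fin n => gaussianReal 0 1) with hμ
  have hscont : Continuous fun x : Fin n → ℝ => ∑ i, x i ^ 2 :=
    continuous_finset_sum _ fun i _ => (continuous_apply i).pow 2
  have hTcont : Continuous fun x : Fin n → ℝ => (Q (∑ i, x i ^ 2)).mulVec x :=
    (continuous_mulVec_pair n).comp ((hQcont.comp hscont).prodMk continuous_id)
  have hTm : Measurable fun x : Fin n → ℝ => (Q (∑ i, x i ^ 2)).mulVec x :=
    hTcont.measurable
  have hprob : IsProbabilityMeasure μ := by rw [hμ]; infer_instance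
  have hmapfin : IsProbabilityMeasure
      (μ.map fun x : Fin n → ℝ => (Q (∑ i, x i ^ 2)).mulVec x) :=
    Measure.isProbabilityMeasure_map hTm.aemeasurable
  refine ext_of_forall_lintegral_eq_of_IsFiniteMeasure fun f => ?_
  have hfm : Measurable fun y : Fin n → ℝ => (f y : ℝ≥0∞) :=
    measurable_coe_nnreal_ennreal.comp f.continuous.measurable
  rw [lintegral_map hfm hTm]
  have hconst : ∀ k : ℕ,
      ∫⁻ x, (f ((Q ((⌊(∑ i, x i ^ 2) * 2 ^ k⌋ : ℝ) / 2 ^ k)).mulVec x) : ℝ≥0∞) ∂μ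
        = ∫⁻ x, (f x : ℝ≥0∞) ∂μ := by
    intro k
    rw [hμ]
    conv_rhs => rw [← step_pres n k Q hQcont hQorth hQdet]
    rw [lintegral_map hfm (meas_Tk n k Q hQcont)]
  have hlim : Tendsto
      (fun k : ℕ => ∫⁻ x, (f ((Q ((⌊(∑ i, x i ^ 2) * 2 ^ k⌋ : ℝ) / 2 ^ k)).mulVec x) : ℝ≥0∞) ∂μ)
      atTop (nhds (∫⁻ x, (f ((Q (∑ i, x i ^ 2)).mulVec x) : ℝ≥0∞) ∂μ)) := by
    refine tendsto_lintegral_of_dominated_convergence (fun _ => (nndist f 0 : ℝ≥0∞))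
      (fun k => measurable_coe_nnreal_ennreal.comp
        (f.continuous.measurable.comp (meas_Tk n k Q hQcont))) (fun k => ?_) ?_ ?_
    · refine Eventually.of_forall fun x => ?_
      rw [ENNReal.coe_le_coe]
      exact BoundedContinuousFunction.NNReal.upper_bound f _
    · rw [lintegral_const]
      exact ENNReal.mul_ne_top ENNReal.coe_ne_top (by simp [hprob.measure_univ])
    · refine Eventually.of_forall fun x => ?_
      have h1 : Tendsto (fun k : ℕ => Q ((⌊(∑ i, x i ^ 2) * 2 ^ k⌋ : ℝ) / 2 ^ k)) atTop
          (nhds (Q (∑ i, x i ^ 2))) :=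
        (hQcont.tendsto _).comp (tendsto_dyadic _)
      have h2 : Continuous fun M : Matrix (Fin n) (Fin n) ℝ => M.mulVec x :=
        (continuous_mulVec_pair n).comp (continuous_id.prodMk continuous_const)
      exact (ENNReal.continuous_coe.tendsto _).comp
        ((f.continuous.tendsto _).comp ((h2.tendsto _).comp h1))
  have hlim' : Tendsto (fun _ : ℕ => ∫⁻ x, (f x : ℝ≥0∞) ∂μ) atTop
      (nhds (∫⁻ x, (f ((Q (∑ i, x i ^ 2)).mulVec x) : ℝ≥0∞) ∂μ)) := by
    simpa only [hconst] using hlim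
  exact tendsto_nhds_unique hlim' tendsto_const_nhds
end

section
/- Let g : ℝⁿ × ℝⁿ → ℝⁿ, let y_{t−1} ∈ ℝⁿ, δ ∈ ℝⁿ, and let ε_t, ε_{t+1}, ε_{t+2}, … be a sequence in ℝⁿ. Define the baseline path by y_t = g(y_{t−1}, ε_t) and y_{t+h} = g(y_{t+h−1}, ε_{t+h}) for h ≥ 1; define the shocked path by y_t^{(δ)} = g(y_{t−1}, ε_t + δ) and y_{t+h}^{(δ)} = g(y_{t+h−1}^{(δ)}, ε_{t+h}) for h ≥ 1; and define the pseudo-shocked path by y_t^{Δ} = y_t + Δ and y_{t+h}^{Δ} = g(y_{t+h−1}^{Δ}, ε_{t+h}) for h ≥ 1, where Δ = g(y_{t−1}, ε_t + δ) − g(y_{t−1}, ε_t). Then y_{t+h}^{(δ)} = y_{t+h}^{Δ} for all h ≥ 0; consequently IRF_t(h, δ, y_{t−1}) := y_{t+h}^{(δ)} − y_{t+h} equals PIRF_t(h, Δ, y_t) := y_{t+h}^{Δ} − y_{t+h} for all h ≥ 0. -/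
/-- Proposition 7.1: in the nonlinear autoregressive model `y_t = g(y_{t-1}, ε_t)`,
the path shocked by adding `δ` to the innovation at horizon 0 coincides with the
pseudo-shocked path obtained by shifting `y_t` by
`Δ = g(y_{t-1}, ε_t + δ) - g(y_{t-1}, ε_t)`; consequently the IRF equals the
pseudo IRF at every horizon. -/
theorem stmt_14 (n : ℕ) (g : (Fin n → ℝ) → (Fin n → ℝ) → (Fin n → ℝ))
    (ylag : Fin n → ℝ) (δ : Fin n → ℝ) (ε : ℕ → Fin n → ℝ)
    (y yδ yΔ : ℕ → Fin n → ℝ) (Δ : Fin n → ℝ)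
    (hΔ : Δ = g ylag (ε 0 + δ) - g ylag (ε 0))
    (hy0 : y 0 = g ylag (ε 0))
    (hy : ∀ h, y (h + 1) = g (y h) (ε (h + 1)))
    (hyδ0 : yδ 0 = g ylag (ε 0 + δ))
    (hyδ : ∀ h, yδ (h + 1) = g (yδ h) (ε (h + 1)))
    (hyΔ0 : yΔ 0 = y 0 + Δ)
    (hyΔ : ∀ h, yΔ (h + 1) = g (yΔ h) (ε (h + 1))) :
    (∀ h, yδ h = yΔ h) ∧ (∀ h, yδ h - y h = yΔ h - y h) := by
  have key : ∀ h, yδ h = yΔ h := by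
    intro h
    induction h with
    | zero => rw [hyδ0, hyΔ0, hy0, hΔ]; abel
    | succ k ih => rw [hyδ k, hyΔ k, ih]
  exact ⟨key, fun h => by rw [key h]⟩
end

section
/- Let (Ω, m₀, P) be a probability space and let 𝒜, ℬ, 𝒞, 𝒟 be sub-σ-algebras of m₀ with 𝒞 ⊆ ℬ and 𝒟 ⊆ ℬ. If 𝒜 and ℬ are conditionally independent given 𝒞 ⊔ 𝒟 (the σ-algebra generated by 𝒞 and 𝒟), and 𝒜 and 𝒟 are conditionally independent given 𝒞, then 𝒜 and ℬ are conditionally independent given 𝒞. -/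
open MeasureTheory ProbabilityTheory

section Aux

variable {Ω : Type*} {m0 : MeasurableSpace Ω} (P : Measure Ω) [IsProbabilityMeasure P]

lemma aux_ind_int {s : Set Ω} (hs : MeasurableSet[m0] s) :
    Integrable (s.indicator (fun _ : Ω => (1 : ℝ))) P :=
  (integrable_const (1 : ℝ)).indicator hs

lemma aux_ind_bound (s : Set Ω) :
    ∀ᵐ x ∂P, ‖s.indicator (fun _ : Ω => (1 : ℝ)) x‖ ≤ 1 := by
  filter_upwards with x
  by_cases hx : x ∈ s <;> simp [hx]

lemma aux_bound {m : MeasurableSpace Ω} (hm : m ≤ m0) {A : Set Ω} (hA : MeasurableSet[m0] A) :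
    ∀ᵐ x ∂P, ‖(P[A.indicator (fun _ : Ω => (1 : ℝ))|m]) x‖ ≤ 1 := by
  have h0 : 0 ≤ᵐ[P] P[A.indicator (fun _ : Ω => (1 : ℝ))|m] :=
    condExp_nonneg (Filter.Eventually.of_forall fun x =>
      Set.indicator_nonneg (fun _ _ => zero_le_one) x)
  have h1 : P[A.indicator (fun _ : Ω => (1 : ℝ))|m] ≤ᵐ[P] P[(fun _ : Ω => (1 : ℝ))|m] :=
    condExp_mono (aux_ind_int P hA) (integrable_const 1)
      (Filter.Eventually.of_forall fun x => by
        by_cases hx : x ∈ A <;> simp [hx])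
  rw [condExp_const hm (1 : ℝ)] at h1
  filter_upwards [h0, h1] with x hx0 hx1
  simp only [Pi.zero_apply] at hx0
  rw [Real.norm_eq_abs, abs_le]
  exact ⟨by linarith, hx1⟩

lemma aux_int_ind {s : Set Ω} (hs : MeasurableSet[m0] s) :
    ∫ x, s.indicator (fun _ : Ω => (1 : ℝ)) x ∂P = (P s).toReal := by
  rw [integral_indicator hs, setIntegral_const, smul_eq_mul, mul_one, measureReal_def]

lemma aux_setInt_ind {t : Set Ω} (ht : MeasurableSet[m0] t) (s : Set Ω) :
    ∫ x in s, t.indicator (fun _ : Ω => (1 : ℝ)) x ∂P = (P (s ∩ t)).toReal := by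
  rw [setIntegral_indicator ht, setIntegral_const, smul_eq_mul, mul_one, measureReal_def]

lemma aux_int_mul_ind (g : Ω → ℝ) {B : Set Ω} (hB : MeasurableSet[m0] B) :
    ∫ x, (g * B.indicator (fun _ : Ω => (1 : ℝ))) x ∂P = ∫ x in B, g x ∂P := by
  have h : g * B.indicator (fun _ : Ω => (1 : ℝ)) = B.indicator g := by
    funext x; by_cases hx : x ∈ B <;> simp [hx]
  rw [h, integral_indicator hB]

lemma aux_setInt_mul_ind (g : Ω → ℝ) {d : Set Ω} (hd : MeasurableSet[m0] d) (c : Set Ω) :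
    ∫ x in c, (g * d.indicator (fun _ : Ω => (1 : ℝ))) x ∂P = ∫ x in c ∩ d, g x ∂P := by
  have h : g * d.indicator (fun _ : Ω => (1 : ℝ)) = d.indicator g := by
    funext x; by_cases hx : x ∈ d <;> simp [hx]
  rw [h, setIntegral_indicator hd]

lemma aux_intOn {g : Ω → ℝ} (hg : Integrable g P) (s : Set Ω) :
    IntegrableOn g s P :=
  hg.integrableOn

lemma aux_setInt_congr {f g : Ω → ℝ} (h : f =ᵐ[P] g) (s : Set Ω) :
    ∫ x in s, f x ∂P = ∫ x in s, g x ∂P :=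
  integral_congr_ae (ae_restrict_of_ae h)

lemma aux_compl {s : Set Ω} (hs : MeasurableSet[m0] s) {g : Ω → ℝ} (hg : Integrable g P)
    {A : Set Ω} (htot : ∫ x, g x ∂P = (P A).toReal)
    (hI : ∫ x in s, g x ∂P = (P (A ∩ s)).toReal) :
    ∫ x in sᶜ, g x ∂P = (P (A ∩ sᶜ)).toReal := by
  have hadd := integral_add_compl hs hg
  have hm : P (A ∩ s) + P (A ∩ sᶜ) = P A := by
    rw [← Set.diff_eq]
    exact measure_inter_add_diff A hs
  have hm' := congrArg ENNReal.toReal hm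
  rw [ENNReal.toReal_add (measure_ne_top P _) (measure_ne_top P _)] at hm'
  rw [hI, htot] at hadd
  linarith

lemma aux_union {f : ℕ → Set Ω} (hdisj : Pairwise (Function.onFun Disjoint f))
    (hmeas : ∀ i, MeasurableSet[m0] (f i)) {g : Ω → ℝ} (hg : Integrable g P)
    {A : Set Ω} (hA : MeasurableSet[m0] A)
    (hI : ∀ i, ∫ x in f i, g x ∂P = (P (A ∩ f i)).toReal) :
    ∫ x in ⋃ i, f i, g x ∂P = (P (A ∩ ⋃ i, f i)).toReal := by
  rw [integral_iUnion hmeas hdisj hg.integrableOn, Set.inter_iUnion,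
    measure_iUnion (fun i j hij => ((hdisj hij).mono Set.inter_subset_right
      Set.inter_subset_right)) (fun i => hA.inter (hmeas i)),
    ENNReal.tsum_toReal_eq (fun i => measure_ne_top P _)]
  exact tsum_congr hI

/-- If the product formula holds for `A` and `B` given `m`, then the integral of the
conditional probability of `A` given `m` over `B` is `P (A ∩ B)`. -/
lemma aux_key {m : MeasurableSpace Ω} (hm : m ≤ m0) {A B : Set Ω}
    (hA : MeasurableSet[m0] A) (hB : MeasurableSet[m0] B)
    (hprod : P[(A ∩ B).indicator (fun _ : Ω => (1 : ℝ))|m]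
      =ᵐ[P] P[A.indicator (fun _ : Ω => (1 : ℝ))|m] * P[B.indicator (fun _ : Ω => (1 : ℝ))|m]) :
    ∫ x in B, (P[A.indicator (fun _ : Ω => (1 : ℝ))|m]) x ∂P = (P (A ∩ B)).toReal := by
  calc ∫ x in B, (P[A.indicator (fun _ : Ω => (1 : ℝ))|m]) x ∂P
      = ∫ x, ((P[A.indicator (fun _ : Ω => (1 : ℝ))|m])
          * B.indicator (fun _ : Ω => (1 : ℝ))) x ∂P :=
        (aux_int_mul_ind P _ hB).symm
    _ = ∫ x, (P[(P[A.indicator (fun _ : Ω => (1 : ℝ))|m])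
          * B.indicator (fun _ : Ω => (1 : ℝ))|m]) x ∂P := (integral_condExp hm).symm
    _ = ∫ x, ((P[A.indicator (fun _ : Ω => (1 : ℝ))|m])
          * (P[B.indicator (fun _ : Ω => (1 : ℝ))|m])) x ∂P :=
        integral_congr_ae (condExp_stronglyMeasurable_mul_of_bound hm
          stronglyMeasurable_condExp (aux_ind_int P hB) 1 (aux_bound P hm hA))
    _ = ∫ x, (P[(A ∩ B).indicator (fun _ : Ω => (1 : ℝ))|m]) x ∂P :=
        (integral_congr_ae hprod).symm
    _ = ∫ x, (A ∩ B).indicator (fun _ : Ω => (1 : ℝ)) x ∂P := integral_condExp hm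
    _ = (P (A ∩ B)).toReal := aux_int_ind P (hA.inter hB)

end Aux

/-- Proposition 10 in conditional-independence form: if `𝒜 ⟂ ℬ | 𝒞 ⊔ 𝒟` and
`𝒜 ⟂ 𝒟 | 𝒞`, where `𝒞 ⊆ ℬ` and `𝒟 ⊆ ℬ`, then `𝒜 ⟂ ℬ | 𝒞`. -/
theorem stmt_15 {Ω : Type*} {m0 : MeasurableSpace Ω} [StandardBorelSpace Ω]
    (P : Measure Ω) [IsProbabilityMeasure P]
    (mA mB mC mD : MeasurableSpace Ω)
    (hA : mA ≤ m0) (hB : mB ≤ m0)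
    (hCB : mC ≤ mB) (hDB : mD ≤ mB)
    (hC : mC ≤ m0) (hCD : mC ⊔ mD ≤ m0)
    (h1 : CondIndep (mC ⊔ mD) mA mB hCD P)
    (h2 : CondIndep mC mA mD hC P) :
    CondIndep mC mA mB hC P := by
  have hD : mD ≤ m0 := hDB.trans hB
  rw [condIndep_iff _ _ _ hCD hA hB] at h1
  rw [condIndep_iff _ _ _ hC hA hD] at h2
  rw [condIndep_iff _ _ _ hC hA hB]
  intro t1 t2 ht1 ht2
  have ht1' : MeasurableSet[m0] t1 := hA t1 ht1
  have ht2' : MeasurableSet[m0] t2 := hB t2 ht2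
  -- Step 1: `P⟦t1|mC⟧ =ᵐ P⟦t1|mC ⊔ mD⟧`, via uniqueness of conditional expectation and a
  -- π-system argument on `mC ⊔ mD`.
  have hL2 : ∀ s : Set Ω, MeasurableSet[mC ⊔ mD] s →
      ∫ x in s, (P[t1.indicator (fun _ : Ω => (1 : ℝ))|mC]) x ∂P = (P (t1 ∩ s)).toReal := by
    have hgen : (mC ⊔ mD) = MeasurableSpace.generateFrom
        {s : Set Ω | ∃ c, MeasurableSet[mC] c ∧ ∃ d, MeasurableSet[mD] d ∧ s = c ∩ d} := by
      refine le_antisymm (sup_le ?_ ?_) (MeasurableSpace.generateFrom_le ?_)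
      · intro c hc
        exact MeasurableSpace.measurableSet_generateFrom
          ⟨c, hc, Set.univ, MeasurableSet.univ, (Set.inter_univ c).symm⟩
      · intro d hd
        exact MeasurableSpace.measurableSet_generateFrom
          ⟨Set.univ, MeasurableSet.univ, d, hd, (Set.univ_inter d).symm⟩
      · rintro s ⟨c, hc, d, hd, rfl⟩
        exact ((le_sup_left : mC ≤ mC ⊔ mD) c hc).inter ((le_sup_right : mD ≤ mC ⊔ mD) d hd)
    have hpi : IsPiSystem
        {s : Set Ω | ∃ c, MeasurableSet[mC] c ∧ ∃ d, MeasurableSet[mD] d ∧ s = c ∩ d} := by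
      rintro s ⟨c1, hc1, d1, hd1, rfl⟩ t ⟨c2, hc2, d2, hd2, rfl⟩ -
      exact ⟨c1 ∩ c2, hc1.inter hc2, d1 ∩ d2, hd1.inter hd2, Set.inter_inter_inter_comm _ _ _ _⟩
    refine @MeasurableSpace.induction_on_inter Ω (mC ⊔ mD)
      (fun s _ => ∫ x in s, (P[t1.indicator (fun _ : Ω => (1 : ℝ))|mC]) x ∂P = (P (t1 ∩ s)).toReal)
      _ hgen hpi ?_ ?_ ?_ ?_
    · simp
    · rintro s ⟨c, hc, d, hd, rfl⟩
      have hc0 : MeasurableSet[m0] c := hC c hc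
      have hd0 : MeasurableSet[m0] d := hD d hd
      have hint_mul : Integrable ((P[t1.indicator (fun _ : Ω => (1 : ℝ))|mC])
          * d.indicator (fun _ : Ω => (1 : ℝ))) P :=
        (aux_ind_int P hd0).bdd_mul (stronglyMeasurable_condExp.mono hC).aestronglyMeasurable
          (aux_bound P hC ht1')
      calc ∫ x in c ∩ d, (P[t1.indicator (fun _ : Ω => (1 : ℝ))|mC]) x ∂P
          = ∫ x in c, ((P[t1.indicator (fun _ : Ω => (1 : ℝ))|mC])
              * d.indicator (fun _ : Ω => (1 : ℝ))) x ∂P :=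
            (aux_setInt_mul_ind P _ hd0 c).symm
        _ = ∫ x in c, (P[(P[t1.indicator (fun _ : Ω => (1 : ℝ))|mC])
              * d.indicator (fun _ : Ω => (1 : ℝ))|mC]) x ∂P :=
            (setIntegral_condExp hC hint_mul hc).symm
        _ = ∫ x in c, ((P[t1.indicator (fun _ : Ω => (1 : ℝ))|mC])
              * (P[d.indicator (fun _ : Ω => (1 : ℝ))|mC])) x ∂P :=
            aux_setInt_congr P (condExp_stronglyMeasurable_mul_of_bound hC
              stronglyMeasurable_condExp (aux_ind_int P hd0) 1 (aux_bound P hC ht1')) c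
        _ = ∫ x in c, (P[(t1 ∩ d).indicator (fun _ : Ω => (1 : ℝ))|mC]) x ∂P :=
            aux_setInt_congr P (h2 t1 d ht1 hd).symm c
        _ = ∫ x in c, (t1 ∩ d).indicator (fun _ : Ω => (1 : ℝ)) x ∂P :=
            setIntegral_condExp hC (aux_ind_int P (ht1'.inter hd0)) hc
        _ = (P (c ∩ (t1 ∩ d))).toReal := aux_setInt_ind P (ht1'.inter hd0) c
        _ = (P (t1 ∩ (c ∩ d))).toReal := by
            have hseq : c ∩ (t1 ∩ d) = t1 ∩ (c ∩ d) := by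
              ext x
              simp only [Set.mem_inter_iff]
              tauto
            rw [hseq]
    · intro s hs hCs
      have hs0 : MeasurableSet[m0] s := hCD s hs
      have htot : ∫ x, (P[t1.indicator (fun _ : Ω => (1 : ℝ))|mC]) x ∂P = (P t1).toReal := by
        rw [integral_condExp hC]
        exact aux_int_ind P ht1'
      exact aux_compl P hs0 integrable_condExp htot hCs
    · intro f hdisj hmeas hCs
      have hmeas0 : ∀ i, MeasurableSet[m0] (f i) := fun i => hCD _ (hmeas i)
      exact aux_union P hdisj hmeas0 integrable_condExp ht1' hCs
  have hL2' : P[t1.indicator (fun _ : Ω => (1 : ℝ))|mC]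
      =ᵐ[P] P[t1.indicator (fun _ : Ω => (1 : ℝ))|mC ⊔ mD] := by
    refine ae_eq_condExp_of_forall_setIntegral_eq hCD (aux_ind_int P ht1')
      (fun s _ _ => aux_intOn P integrable_condExp s) (fun s hs _ => ?_)
      ((stronglyMeasurable_condExp.mono le_sup_left).aestronglyMeasurable)
    rw [hL2 s hs, aux_setInt_ind P ht1' s, Set.inter_comm]
  -- Step 2: `P⟦t1|mC ⊔ mD⟧ =ᵐ P⟦t1|mB⟧`, again by uniqueness, using `h1`.
  have hL1 : P[t1.indicator (fun _ : Ω => (1 : ℝ))|mC ⊔ mD]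
      =ᵐ[P] P[t1.indicator (fun _ : Ω => (1 : ℝ))|mB] := by
    refine ae_eq_condExp_of_forall_setIntegral_eq hB (aux_ind_int P ht1')
      (fun s _ _ => aux_intOn P integrable_condExp s) (fun s hs _ => ?_)
      ((stronglyMeasurable_condExp.mono (sup_le hCB hDB)).aestronglyMeasurable)
    rw [aux_key P hCD ht1' (hB s hs) (h1 t1 s ht1 hs), aux_setInt_ind P ht1' s,
      Set.inter_comm]
  have hL : P[t1.indicator (fun _ : Ω => (1 : ℝ))|mB]
      =ᵐ[P] P[t1.indicator (fun _ : Ω => (1 : ℝ))|mC] := (hL2'.trans hL1).symm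
  -- Step 3: conclude.
  have heq : (t1 ∩ t2).indicator (fun _ : Ω => (1 : ℝ))
      = t2.indicator (fun _ : Ω => (1 : ℝ)) * t1.indicator (fun _ : Ω => (1 : ℝ)) := by
    funext x
    by_cases h1x : x ∈ t1 <;> by_cases h2x : x ∈ t2 <;>
      simp [h1x, h2x, Set.indicator_apply]
  have hinner : P[(t1 ∩ t2).indicator (fun _ : Ω => (1 : ℝ))|mB]
      =ᵐ[P] (P[t1.indicator (fun _ : Ω => (1 : ℝ))|mC]) * t2.indicator (fun _ : Ω => (1 : ℝ)) := by
    calc P[(t1 ∩ t2).indicator (fun _ : Ω => (1 : ℝ))|mB]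
        = P[t2.indicator (fun _ : Ω => (1 : ℝ)) * t1.indicator (fun _ : Ω => (1 : ℝ))|mB] := by
          rw [heq]
      _ =ᵐ[P] t2.indicator (fun _ : Ω => (1 : ℝ))
            * (P[t1.indicator (fun _ : Ω => (1 : ℝ))|mB]) :=
          condExp_stronglyMeasurable_mul_of_bound hB
            (stronglyMeasurable_const.indicator ht2) (aux_ind_int P ht1') 1 (aux_ind_bound P t2)
      _ =ᵐ[P] t2.indicator (fun _ : Ω => (1 : ℝ))
            * (P[t1.indicator (fun _ : Ω => (1 : ℝ))|mC]) :=
          Filter.EventuallyEq.mul Filter.EventuallyEq.rfl hL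
      _ = (P[t1.indicator (fun _ : Ω => (1 : ℝ))|mC]) * t2.indicator (fun _ : Ω => (1 : ℝ)) := by
          rw [mul_comm]
  calc P[(t1 ∩ t2).indicator (fun _ : Ω => (1 : ℝ))|mC]
      =ᵐ[P] P[P[(t1 ∩ t2).indicator (fun _ : Ω => (1 : ℝ))|mB]|mC] :=
        (condExp_condExp_of_le hCB hB).symm
    _ =ᵐ[P] P[(P[t1.indicator (fun _ : Ω => (1 : ℝ))|mC])
          * t2.indicator (fun _ : Ω => (1 : ℝ))|mC] := condExp_congr_ae hinner
    _ =ᵐ[P] (P[t1.indicator (fun _ : Ω => (1 : ℝ))|mC])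
          * (P[t2.indicator (fun _ : Ω => (1 : ℝ))|mC]) :=
        condExp_stronglyMeasurable_mul_of_bound hC stronglyMeasurable_condExp
          (aux_ind_int P ht2') 1 (aux_bound P hC ht1')
end

section
/- Let T be a real 2×2 matrix such that for every u ∈ [0,1]², the vector Tu belongs to [0,1]², and suppose det T = 1. Then T is the identity matrix. -/
open Matrix

/-- The identity is the only linear transformation mapping the unit square into
itself with determinant equal to one. -/
theorem stmt_17 (T : Matrix (Fin 2) (Fin 2) ℝ)
    (hmaps : ∀ u : Fin 2 → ℝ, (∀ i, u i ∈ Set.Icc (0 : ℝ) 1) →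
      ∀ i, T.mulVec u i ∈ Set.Icc (0 : ℝ) 1)
    (hdet : T.det = 1) :
    T = 1 := by
  have h0 := hmaps ![1,0] (by intro i; fin_cases i <;> simp)
  have h1 := hmaps ![0,1] (by intro i; fin_cases i <;> simp)
  have h2 := hmaps ![1,1] (by intro i; fin_cases i <;> simp)
  have h00 := h0 0; have h01 := h0 1
  have h10 := h1 0; have h11 := h1 1
  have h20 := h2 0; have h21 := h2 1
  simp [mulVec, dotProduct, Fin.sum_univ_two, Set.mem_Icc] at h00 h01 h10 h11 h20 h21
  rw [Matrix.det_fin_two] at hdet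
  ext i j
  fin_cases i <;> fin_cases j <;> simp [Matrix.one_apply] <;> nlinarith [h00.1, h00.2, h01.1, h01.2, h10.1, h10.2, h11.1, h11.2, h20.1, h20.2, h21.1, h21.2]
end
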